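/- Let D ⊆ ℝ^k be the set D := {p_k < 0} ∪ {p_k = 0, p_{k-1} < 0} ∪ ⋯ ∪ {p_k = ⋯ = p₂ = 0, p₁ < 1}. Let φ₁,…,φ_k : (0,∞) → (0,∞) be continuous, increasing, tending to ∞, with ∫e^{−cφᵢ}dx < ∞ for all c > 0 and all i, and with φᵢ^κ < φ_{i+1} for some κ > 1 and all i. Let λ = (1/Z)e^{−φ₁}dx. Then for (p₁,…,p_k) ∈ ℝ^k, the integral ∫ e^{p₁φ₁+⋯+p_kφ_k} dλ is finite if and only if (p₁,…,p_k) ∈ D. -/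

import Mathlib

open MeasureTheory Set Real Filter
open scoped ENNReal

private lemma chain_aux {k : ℕ} {κ : ℝ} (hκ1 : 1 < κ) (φ : Fin (k + 1) → ℝ → ℝ)
    (hpt : ∀ i : Fin k, ∀ x ∈ Ioi (0 : ℝ), (φ i.castSucc x) ^ κ < φ i.succ x)
    (hφpos : ∀ i, ∀ x ∈ Ioi (0 : ℝ), 0 < φ i x)
    {x : ℝ} (hx : x ∈ Ioi (0 : ℝ)) (h1 : ∀ m, 1 ≤ φ m x) :
    ∀ i j : Fin (k + 1), i < j → φ i x ≤ (φ j x) ^ (1 / κ) := by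
  have hκ0 : (0 : ℝ) < κ := by linarith
  have step : ∀ i : Fin k, φ i.castSucc x ≤ (φ i.succ x) ^ (1 / κ) := by
    intro i
    have h := (hpt i x hx).le
    have ha := (hφpos i.castSucc x hx).le
    calc φ i.castSucc x = ((φ i.castSucc x) ^ κ) ^ (1 / κ) := by
          rw [← Real.rpow_mul ha, mul_one_div_cancel (ne_of_gt hκ0), Real.rpow_one]
      _ ≤ (φ i.succ x) ^ (1 / κ) := Real.rpow_le_rpow (by positivity) h (by positivity)
  have step' : ∀ i : Fin k, φ i.castSucc x ≤ φ i.succ x := by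
    intro i
    refine (step i).trans ?_
    calc (φ i.succ x) ^ (1 / κ) ≤ (φ i.succ x) ^ (1 : ℝ) :=
          Real.rpow_le_rpow_of_exponent_le (h1 _) (by rw [div_le_one hκ0]; linarith)
      _ = φ i.succ x := Real.rpow_one _
  have mono : ∀ n : ℕ, ∀ i j : Fin (k + 1), (j : ℕ) = (i : ℕ) + n → φ i x ≤ φ j x := by
    intro n
    induction n with
    | zero =>
      intro i j hij
      have : i = j := Fin.ext (by omega)
      rw [this]
    | succ n ih =>
      intro i j hij
      have hj0 : j ≠ 0 := by
        intro h
        rw [h] at hij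
        simp at hij
      set j' := j.pred hj0 with hj'
      have hjc : ((j'.castSucc : Fin (k + 1)) : ℕ) = (i : ℕ) + n := by
        simp [hj', Fin.coe_pred]
        omega
      have h1' := ih i j'.castSucc hjc
      have h2' := step' j'
      rw [Fin.succ_pred] at h2'
      exact h1'.trans h2'
  intro i j hij
  have hj0 : j ≠ 0 := by
    intro h
    rw [h] at hij
    exact absurd hij (by simp [Fin.lt_def])
  set j' := j.pred hj0 with hj'
  have h1' : φ i x ≤ φ j'.castSucc x := by
    apply mono ((j'.castSucc : ℕ) - (i : ℕ)) i j'.castSucc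
    have : (i : ℕ) < (j : ℕ) := hij
    simp [hj', Fin.coe_pred]
    omega
  have h2' := step j'
  rw [Fin.succ_pred] at h2'
  exact h1'.trans h2'

private lemma key_aux {k : ℕ} {κ : ℝ} (hκ1 : 1 < κ) (φ : Fin (k + 1) → ℝ → ℝ)
    (hpt : ∀ i : Fin k, ∀ x ∈ Ioi (0 : ℝ), (φ i.castSucc x) ^ κ < φ i.succ x)
    (hφpos : ∀ i, ∀ x ∈ Ioi (0 : ℝ), 0 < φ i x)
    (hφtop : ∀ i, Tendsto (φ i) atTop atTop)
    (q : Fin (k + 1) → ℝ) (istar : Fin (k + 1)) (hz : ∀ j, istar < j → q j = 0)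
    {c : ℝ} (hc : 0 < c) :
    ∀ᶠ x in atTop, |∑ i, q i * φ i x - q istar * φ istar x| ≤ c * φ istar x := by
  set M : ℝ := ∑ i, |q i| with hM
  have hM0 : 0 ≤ M := Finset.sum_nonneg fun i _ => abs_nonneg _
  have hM1 : (0 : ℝ) < M + 1 := by linarith
  have hexp : (0 : ℝ) < 1 - 1 / κ := by
    have h1κ : 1 / κ < 1 := by rw [div_lt_one (by linarith)]; linarith
    linarith
  have htend : Tendsto (fun x => (φ istar x) ^ (1 / κ - 1)) atTop (nhds 0) := by
    have h := (tendsto_rpow_neg_atTop hexp).comp (hφtop istar)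
    have : (fun x => (φ istar x) ^ (-(1 - 1 / κ))) = fun x => (φ istar x) ^ (1 / κ - 1) := by
      funext x; rw [neg_sub]
    rwa [Function.comp_def, this] at h
  have hev3 := htend.eventually_le_const (div_pos hc hM1)
  filter_upwards [eventually_gt_atTop (0 : ℝ),
    eventually_all.2 fun m => (hφtop m).eventually_ge_atTop 1, hev3] with x hx h1 h3
  have hxI : x ∈ Ioi (0 : ℝ) := hx
  have hφi := hφpos istar x hxI
  have hsum : ∑ i, q i * φ i x - q istar * φ istar x
      = ∑ i ∈ Finset.univ.erase istar, q i * φ i x := by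
    rw [← Finset.sum_erase_add Finset.univ _ (Finset.mem_univ istar)]
    ring
  rw [hsum]
  have hbound : ∀ i ∈ Finset.univ.erase istar,
      |q i * φ i x| ≤ |q i| * (φ istar x) ^ (1 / κ) := by
    intro i hi
    rw [abs_mul, abs_of_pos (hφpos i x hxI)]
    rcases lt_or_gt_of_ne (Finset.ne_of_mem_erase hi) with h | h
    · exact mul_le_mul_of_nonneg_left (chain_aux hκ1 φ hpt hφpos hxI h1 i istar h)
        (abs_nonneg _)
    · rw [hz i h]
      simp
  have hrp : (φ istar x) ^ (1 / κ) = (φ istar x) ^ (1 / κ - 1) * φ istar x := by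
    rw [Real.rpow_sub hφi, Real.rpow_one, div_mul_cancel₀ _ (ne_of_gt hφi)]
  calc |∑ i ∈ Finset.univ.erase istar, q i * φ i x|
      ≤ ∑ i ∈ Finset.univ.erase istar, |q i * φ i x| := Finset.abs_sum_le_sum_abs _ _
    _ ≤ ∑ i ∈ Finset.univ.erase istar, |q i| * (φ istar x) ^ (1 / κ) :=
        Finset.sum_le_sum hbound
    _ = (∑ i ∈ Finset.univ.erase istar, |q i|) * (φ istar x) ^ (1 / κ) :=
        (Finset.sum_mul _ _ _).symm
    _ ≤ (M + 1) * (φ istar x) ^ (1 / κ) := by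
        apply mul_le_mul_of_nonneg_right _ (by positivity)
        refine le_trans ?_ (by linarith : M ≤ M + 1)
        exact Finset.sum_le_sum_of_subset_of_nonneg (Finset.erase_subset _ _)
          (fun i _ _ => abs_nonneg _)
    _ = (M + 1) * ((φ istar x) ^ (1 / κ - 1) * φ istar x) := by rw [hrp]
    _ ≤ (M + 1) * ((c / (M + 1)) * φ istar x) := by
        apply mul_le_mul_of_nonneg_left _ hM1.le
        exact mul_le_mul_of_nonneg_right h3 hφi.le
    _ = c * φ istar x := by field_simp

/-- For `λ = (1/Z)e^{-φ₀}dx` on (0,∞) with `φ₀,…,φ_k` positive, continuous,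
increasing, tending to `∞`, with `∫ e^{-cφᵢ}dx < ∞` for all `c > 0` and `φᵢ^κ < φ_{i+1}`
for some `κ > 1`, the integral `∫ e^{Σᵢ pᵢφᵢ} dλ` is finite iff `p` belongs to the set
`D = {p_k<0} ∪ {p_k=0, p_{k-1}<0} ∪ ⋯ ∪ {p_k=⋯=p₁=0, p₀<1}`. -/
theorem lmgf_domain_characterization (k : ℕ) (φ : Fin (k + 1) → ℝ → ℝ)
    (hφcont : ∀ i, ContinuousOn (φ i) (Ioi (0 : ℝ)))
    (hφpos : ∀ i, ∀ x ∈ Ioi (0 : ℝ), 0 < φ i x)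
    (hφmono : ∀ i, StrictMonoOn (φ i) (Ioi (0 : ℝ)))
    (hφtop : ∀ i, Tendsto (φ i) atTop atTop)
    (hφint : ∀ i, ∀ c > (0 : ℝ), IntegrableOn (fun x => exp (-(c * φ i x))) (Ioi (0 : ℝ)))
    (hκ : ∃ κ > (1 : ℝ), ∀ i : Fin k, ∀ x ∈ Ioi (0 : ℝ),
      (φ i.castSucc x) ^ κ < φ i.succ x)
    (Z : ℝ) (hZpos : 0 < Z) (hZdef : Z = ∫ x in Ioi (0 : ℝ), exp (-(φ 0 x)))
    (lam : Measure ℝ)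
    (hlam : lam = (volume.restrict (Ioi (0 : ℝ))).withDensity
      (fun x => ENNReal.ofReal ((1 / Z) * exp (-(φ 0 x)))))
    (p : Fin (k + 1) → ℝ) :
    (∫⁻ x, ENNReal.ofReal (exp (∑ i, p i * φ i x)) ∂lam) < ⊤ ↔
      ∃ i : Fin (k + 1), (∀ j, i < j → p j = 0) ∧
        (if i = 0 then p 0 < 1 else p i < 0) := by
  obtain ⟨κ, hκ1, hpt⟩ := hκ
  set q : Fin (k + 1) → ℝ := fun i => p i - if i = 0 then 1 else 0 with hqdef
  have hqne : ∀ i : Fin (k + 1), i ≠ 0 → q i = p i := by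
    intro i hi; simp [hqdef, hi]
  have hq0 : q 0 = p 0 - 1 := by simp [hqdef]
  -- rewrite RHS in terms of q
  have hite : ∀ i : Fin (k + 1), ((if i = 0 then p 0 < 1 else p i < 0) ↔ q i < 0) := by
    intro i
    by_cases hi : i = 0
    · subst hi
      simp [hq0, sub_neg]
    · rw [if_neg hi, hqne i hi]
  have hRHS : (∃ i : Fin (k + 1), (∀ j, i < j → p j = 0) ∧
      (if i = 0 then p 0 < 1 else p i < 0)) ↔
      (∃ i : Fin (k + 1), (∀ j, i < j → q j = 0) ∧ q i < 0) := by
    apply exists_congr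
    intro i
    apply and_congr _ (hite i)
    apply forall_congr'
    intro j
    apply imp_congr_right
    intro hj
    have hj0 : j ≠ 0 := Fin.pos_iff_ne_zero.mp (lt_of_le_of_lt (Fin.zero_le i) hj)
    rw [hqne j hj0]
  -- the sum identity
  have hsum : ∀ x : ℝ, ∑ i, q i * φ i x = ∑ i, p i * φ i x - φ 0 x := by
    intro x
    simp only [hqdef, sub_mul, Finset.sum_sub_distrib, ite_mul, one_mul, zero_mul]
    rw [Finset.sum_ite_eq' Finset.univ (0 : Fin (k + 1)) (fun i => φ i x)]
    simp
  have hZinv : (0 : ℝ) < 1 / Z := by positivity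
  -- measurability facts
  have hmd : AEMeasurable (fun x => ENNReal.ofReal ((1 / Z) * exp (-(φ 0 x))))
      (volume.restrict (Ioi (0 : ℝ))) := by
    apply ContinuousOn.aemeasurable _ measurableSet_Ioi
    exact ENNReal.continuous_ofReal.comp_continuousOn
      (continuousOn_const.mul (Real.continuous_exp.comp_continuousOn (hφcont 0).neg))
  have hmg : AEMeasurable (fun x => ENNReal.ofReal (exp (∑ i, p i * φ i x))) lam := by
    rw [hlam]
    refine AEMeasurable.mono_ac ?_ (withDensity_absolutelyContinuous _ _)
    apply ContinuousOn.aemeasurable _ measurableSet_Ioi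
    apply ENNReal.continuous_ofReal.comp_continuousOn
    apply Real.continuous_exp.comp_continuousOn
    exact continuousOn_finset_sum _ fun i _ => continuousOn_const.mul (hφcont i)
  -- rewrite LHS
  have hrw : (∫⁻ x, ENNReal.ofReal (exp (∑ i, p i * φ i x)) ∂lam)
      = ENNReal.ofReal (1 / Z) *
        ∫⁻ x in Ioi (0 : ℝ), ENNReal.ofReal (exp (∑ i, q i * φ i x)) := by
    rw [hlam] at hmg ⊢
    rw [lintegral_withDensity_eq_lintegral_mul₀' hmd hmg]
    rw [← lintegral_const_mul' _ _ ENNReal.ofReal_ne_top]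
    apply lintegral_congr
    intro x
    simp only [Pi.mul_apply]
    rw [ENNReal.ofReal_mul hZinv.le, mul_assoc,
      ← ENNReal.ofReal_mul (Real.exp_nonneg _), ← Real.exp_add]
    congr 2
    rw [hsum x]
    ring
  rw [hrw, hRHS]
  have hZof0 : ENNReal.ofReal (1 / Z) ≠ 0 := by
    simp only [ne_eq, ENNReal.ofReal_eq_zero, not_le]
    exact hZinv
  have hmul : ∀ A : ℝ≥0∞, ENNReal.ofReal (1 / Z) * A < ⊤ ↔ A < ⊤ := by
    intro A
    rw [ENNReal.mul_lt_top_iff]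
    constructor
    · rintro (⟨-, h⟩ | h | h)
      · exact h
      · exact absurd h hZof0
      · rw [h]; exact ENNReal.zero_lt_top
    · intro h
      exact Or.inl ⟨ENNReal.ofReal_lt_top, h⟩
  rw [hmul]
  -- case analysis on q
  by_cases hQ : ∀ i, q i = 0
  · apply iff_of_false
    · intro hfin
      have h1 : (∫⁻ x in Ioi (0 : ℝ), ENNReal.ofReal (exp (∑ i, q i * φ i x))) = ⊤ := by
        have : ∀ x : ℝ, ENNReal.ofReal (exp (∑ i, q i * φ i x)) = 1 := by
          intro x; simp [hQ]
        rw [lintegral_congr this, setLIntegral_one, Real.volume_Ioi]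
      rw [h1] at hfin
      exact lt_irrefl _ hfin
    · rintro ⟨i, -, hlt⟩
      rw [hQ i] at hlt
      exact lt_irrefl _ hlt
  · push_neg at hQ
    set s : Finset (Fin (k + 1)) := Finset.univ.filter (fun i => q i ≠ 0) with hs
    have hsne : s.Nonempty := by
      obtain ⟨i, hi⟩ := hQ
      exact ⟨i, by simp [hs, hi]⟩
    set istar := s.max' hsne with histar
    have histar_ne : q istar ≠ 0 := by
      have := s.max'_mem hsne
      simpa [hs] using this
    have hz : ∀ j, istar < j → q j = 0 := by
      intro j hj
      by_contra hqj
      have hjs : j ∈ s := by simp [hs, hqj]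
      exact absurd (s.le_max' j hjs) (not_le.mpr hj)
    rcases lt_or_gt_of_ne histar_ne with hneg | hpos
    · -- convergent case
      apply iff_of_true _ ⟨istar, hz, hneg⟩
      set c : ℝ := -(q istar) / 2 with hcdef
      have hc : 0 < c := div_pos (neg_pos.mpr hneg) two_pos
      have hkey := key_aux hκ1 φ hpt hφpos hφtop q istar hz hc
      have hg : ∀ᶠ x in atTop, ∑ i, q i * φ i x ≤ -(c * φ istar x) := by
        filter_upwards [hkey] with x hx
        have h2 := (abs_le.mp hx).2
        have hq2c : q istar = -2 * c := by rw [hcdef]; ring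
        have : q istar * φ istar x + c * φ istar x = -(c * φ istar x) := by
          rw [hq2c]; ring
        linarith
      obtain ⟨X₀, hX₀⟩ := eventually_atTop.mp hg
      set X : ℝ := max X₀ 1 with hXdef
      have hXpos : (0 : ℝ) < X := lt_of_lt_of_le one_pos (le_max_right _ _)
      have hX : ∀ x ≥ X, ∑ i, q i * φ i x ≤ -(c * φ istar x) := fun x hx =>
        hX₀ x (le_trans (le_max_left _ _) hx)
      rw [← Ioc_union_Ioi_eq_Ioi hXpos.le,
        lintegral_union measurableSet_Ioi Ioc_disjoint_Ioi_same]
      apply ENNReal.add_lt_top.mpr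
      constructor
      · set B : ℝ := ∑ i, |q i| * φ i X with hB
        have hbd : ∀ x ∈ Ioc (0 : ℝ) X, ENNReal.ofReal (exp (∑ i, q i * φ i x))
            ≤ ENNReal.ofReal (exp B) := by
          intro x hx
          apply ENNReal.ofReal_le_ofReal
          apply Real.exp_le_exp.mpr
          apply Finset.sum_le_sum
          intro i _
          have hxm : x ∈ Ioi (0 : ℝ) := hx.1
          have hXm : X ∈ Ioi (0 : ℝ) := hXpos
          have h1 : q i * φ i x ≤ |q i| * φ i x :=
            mul_le_mul_of_nonneg_right (le_abs_self _) (hφpos i x hxm).le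
          have h2 : φ i x ≤ φ i X := (hφmono i).monotoneOn hxm hXm hx.2
          exact h1.trans (mul_le_mul_of_nonneg_left h2 (abs_nonneg _))
        calc (∫⁻ x in Ioc (0 : ℝ) X, ENNReal.ofReal (exp (∑ i, q i * φ i x)))
            ≤ ∫⁻ _ in Ioc (0 : ℝ) X, ENNReal.ofReal (exp B) :=
              setLIntegral_mono' measurableSet_Ioc hbd
          _ = ENNReal.ofReal (exp B) * volume (Ioc (0 : ℝ) X) := setLIntegral_const _ _
          _ < ⊤ := by
              rw [Real.volume_Ioc]
              exact ENNReal.mul_lt_top ENNReal.ofReal_lt_top ENNReal.ofReal_lt_top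
      · calc (∫⁻ x in Ioi X, ENNReal.ofReal (exp (∑ i, q i * φ i x)))
            ≤ ∫⁻ x in Ioi X, ENNReal.ofReal (exp (-(c * φ istar x))) := by
              apply setLIntegral_mono' measurableSet_Ioi
              intro x hx
              exact ENNReal.ofReal_le_ofReal (Real.exp_le_exp.mpr (hX x (le_of_lt hx)))
          _ ≤ ∫⁻ x in Ioi (0 : ℝ), ENNReal.ofReal (exp (-(c * φ istar x))) :=
              lintegral_mono_set (Ioi_subset_Ioi hXpos.le)
          _ < ⊤ := (hφint istar c hc).lintegral_lt_top
    · -- divergent case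
      apply iff_of_false
      · intro hfin
        have hg : ∀ᶠ x in atTop, (0 : ℝ) ≤ ∑ i, q i * φ i x := by
          have hc2 : (0 : ℝ) < q istar / 2 := half_pos hpos
          filter_upwards [key_aux hκ1 φ hpt hφpos hφtop q istar hz hc2,
            eventually_gt_atTop (0 : ℝ)] with x hx hx0
          have h1 := (abs_le.mp hx).1
          have h2 := hφpos istar x hx0
          nlinarith
        obtain ⟨X₀, hX₀⟩ := eventually_atTop.mp hg
        set X : ℝ := max X₀ 1 with hXdef
        have hXpos : (0 : ℝ) < X := lt_of_lt_of_le one_pos (le_max_right _ _)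
        have hcontra : (⊤ : ℝ≥0∞) ≤
            ∫⁻ x in Ioi (0 : ℝ), ENNReal.ofReal (exp (∑ i, q i * φ i x)) := by
          calc (⊤ : ℝ≥0∞) = volume (Ioi X) := (Real.volume_Ioi).symm
            _ = ∫⁻ _ in Ioi X, 1 := (setLIntegral_one _).symm
            _ ≤ ∫⁻ x in Ioi X, ENNReal.ofReal (exp (∑ i, q i * φ i x)) := by
                apply setLIntegral_mono' measurableSet_Ioi
                intro x hx
                rw [ENNReal.one_le_ofReal]
                calc (1 : ℝ) = exp 0 := (Real.exp_zero).symm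
                  _ ≤ exp (∑ i, q i * φ i x) := Real.exp_le_exp.mpr
                      (hX₀ x (le_trans (le_max_left _ _) hx.le))
            _ ≤ ∫⁻ x in Ioi (0 : ℝ), ENNReal.ofReal (exp (∑ i, q i * φ i x)) :=
                lintegral_mono_set (Ioi_subset_Ioi hXpos.le)
        exact absurd (lt_of_le_of_lt hcontra hfin) (lt_irrefl _)
      · rintro ⟨i, hzq, hlt⟩
        rcases lt_trichotomy i istar with h | h | h
        · exact histar_ne (hzq istar h)
        · rw [h] at hlt; linarith
        · rw [hz i h] at hlt; exact lt_irrefl _ hlt
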